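/- (Non-empty core for compatible measurements) Let (L, R) be a QIVPM on ℂ^d and let S be a set of projectors on ℂ^d such that all elements of S pairwise commute, S contains the zero and identity matrices, and S is closed under P ↦ 1 − P, under (P, Q) ↦ P * Q, and under (P, Q) ↦ P + Q − P * Q. Then there exists a state ρ on ℂ^d consistent with (L, R) on every element of S, i.e. L P ≤ Re (Matrix.trace (ρ * P)) ≤ R P for every P ∈ S. -/

import Mathlib

open Matrix
open scoped ComplexOrder

/-- A projector on `ℂ^d`: an idempotent, self-adjoint matrix. -/
def IsProjector {d : ℕ} (P : Matrix (Fin d) (Fin d) ℂ) : Prop :=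
  P * P = P ∧ Pᴴ = P

/-- A quantum interval-valued probability measure (QIVPM) on `ℂ^d`,
given by the pair of interval-endpoint functions `L ≤ R`. -/
def IsQIVPM {d : ℕ} (L R : Matrix (Fin d) (Fin d) ℂ → ℝ) : Prop :=
  (∀ P, IsProjector P → 0 ≤ L P ∧ L P ≤ R P ∧ R P ≤ 1) ∧
  (L 0 = 0 ∧ R 0 = 0) ∧
  (L 1 = 1 ∧ R 1 = 1) ∧
  (∀ P, IsProjector P → L (1 - P) = 1 - R P ∧ R (1 - P) = 1 - L P) ∧
  (∀ P₀ P₁, IsProjector P₀ → IsProjector P₁ → P₀ * P₁ = P₁ * P₀ →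
    L P₀ + L P₁ ≤ L (P₀ + P₁ - P₀ * P₁) + L (P₀ * P₁) ∧
    R (P₀ + P₁ - P₀ * P₁) + R (P₀ * P₁) ≤ R P₀ + R P₁)

/-- A QIVPM is `δ`-deterministic if every projector's interval lies in `[0,δ]` or `[1-δ,1]`. -/
def IsDeltaDet {d : ℕ} (δ : ℝ) (L R : Matrix (Fin d) (Fin d) ℂ → ℝ) : Prop :=
  ∀ P, IsProjector P → R P ≤ δ ∨ 1 - δ ≤ L P

/-- A QIVPM is `0`-deterministic if every projector is assigned `[0,0]` or `[1,1]`. -/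
def IsZeroDet {d : ℕ} (L R : Matrix (Fin d) (Fin d) ℂ → ℝ) : Prop :=
  ∀ P, IsProjector P → (L P = 0 ∧ R P = 0) ∨ (L P = 1 ∧ R P = 1)

/-- A state (density matrix) on `ℂ^d`. -/
def IsState {d : ℕ} (ρ : Matrix (Fin d) (Fin d) ℂ) : Prop :=
  ρ.PosSemidef ∧ ρ.trace = 1

section Helpers

lemma trace_re_eq (d : ℕ) (B : Matrix (Fin d) (Fin d) ℂ) :
    ((Bᴴ * B).trace).re = ∑ i, ∑ j, Complex.normSq (B j i) := by
  have h : (Bᴴ * B).trace = ∑ i, ∑ j, (starRingEnd ℂ) (B j i) * B j i := by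
    simp [Matrix.trace, Matrix.mul_apply, Matrix.diag, Matrix.conjTranspose_apply]
  rw [h]
  simp only [Complex.re_sum]
  congr 1; ext i; congr 1; ext j
  rw [← Complex.normSq_eq_conj_mul_self]
  simp

lemma psd_trace_re_nonneg {d : ℕ} {A : Matrix (Fin d) (Fin d) ℂ} (hA : A.PosSemidef) :
    0 ≤ A.trace.re := by
  obtain ⟨B, rfl⟩ : ∃ B : Matrix (Fin d) (Fin d) ℂ, A = Bᴴ * B := by
    open scoped MatrixOrder Matrix.Norms.L2Operator in
    exact CStarAlgebra.nonneg_iff_eq_star_mul_self.mp hA.nonneg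
  rw [trace_re_eq]
  exact Finset.sum_nonneg fun i _ => Finset.sum_nonneg fun j _ => Complex.normSq_nonneg _

lemma psd_trace_eq_zero {d : ℕ} {A : Matrix (Fin d) (Fin d) ℂ} (hA : A.PosSemidef)
    (h : A.trace.re = 0) : A = 0 := by
  obtain ⟨B, rfl⟩ : ∃ B : Matrix (Fin d) (Fin d) ℂ, A = Bᴴ * B := by
    open scoped MatrixOrder Matrix.Norms.L2Operator in
    exact CStarAlgebra.nonneg_iff_eq_star_mul_self.mp hA.nonneg
  rw [trace_re_eq] at h
  have hB : B = 0 := by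
    ext i j
    have h1 : ∀ k ∈ Finset.univ, (0:ℝ) ≤ ∑ l, Complex.normSq (B l k) := by
      intro k _; exact Finset.sum_nonneg fun l _ => Complex.normSq_nonneg _
    have h2 := (Finset.sum_eq_zero_iff_of_nonneg h1).mp h j (Finset.mem_univ j)
    have h3 : ∀ l ∈ Finset.univ, (0:ℝ) ≤ Complex.normSq (B l j) := by
      intro l _; exact Complex.normSq_nonneg _
    have h4 := (Finset.sum_eq_zero_iff_of_nonneg h3).mp h2 i (Finset.mem_univ i)
    simpa [Complex.normSq_eq_zero] using h4
  rw [hB]; simp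

lemma proj_eigen {d : ℕ} {P : Matrix (Fin d) (Fin d) ℂ} (h2 : P * P = P) (hH : P.IsHermitian)
    (i : Fin d) : hH.eigenvalues i = 0 ∨ hH.eigenvalues i = 1 := by
  set v := ⇑(hH.eigenvectorBasis i) with hv
  have hev : P *ᵥ v = hH.eigenvalues i • v := hH.mulVec_eigenvectorBasis i
  have h1 : (P * P) *ᵥ v = (hH.eigenvalues i * hH.eigenvalues i) • v := by
    rw [← Matrix.mulVec_mulVec, hev, Matrix.mulVec_smul, hev, smul_smul]
  rw [h2, hev] at h1
  have hvne : v ≠ 0 := by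
    intro hcon
    exact hH.eigenvectorBasis.orthonormal.ne_zero i (by ext j; exact congrFun hcon j)
  have : (hH.eigenvalues i * hH.eigenvalues i - hH.eigenvalues i) • v = 0 := by
    rw [sub_smul, h1, sub_self]
  rcases smul_eq_zero.mp this with h | h
  · have : hH.eigenvalues i * (hH.eigenvalues i - 1) = 0 := by ring_nf; linarith [h]
    rcases mul_eq_zero.mp this with h | h
    · exact Or.inl h
    · exact Or.inr (by linarith [sub_eq_zero.mp h])
  · exact absurd h hvne

lemma proj_trace_nat' {d : ℕ} {P : Matrix (Fin d) (Fin d) ℂ} (h2 : P * P = P)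
    (hH : P.IsHermitian) : ∃ n : ℕ, P.trace = (n : ℂ) := by
  classical
  have hs : P.trace = ∑ i, (hH.eigenvalues i : ℂ) := by
    conv_lhs => rw [hH.spectral_theorem]
    rw [Unitary.conjStarAlgAut_apply, Matrix.trace_mul_cycle]
    rw [Unitary.coe_star_mul_self, one_mul, Matrix.trace_diagonal]
    rfl
  refine ⟨(Finset.univ.filter (fun i => hH.eigenvalues i = 1)).card, ?_⟩
  rw [hs]
  have : ∀ i ∈ Finset.univ, (hH.eigenvalues i : ℂ) = if hH.eigenvalues i = 1 then 1 else 0 := by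
    intro i _
    rcases proj_eigen h2 hH i with h | h <;> simp [h]
  rw [Finset.sum_congr rfl this, Finset.sum_boole]

lemma IsProjector.posSemidef' {d : ℕ} {P : Matrix (Fin d) (Fin d) ℂ} (hP : IsProjector P) :
    P.PosSemidef :=
  by have := Matrix.posSemidef_conjTranspose_mul_self P; rwa [hP.2, hP.1] at this

lemma IsProjector.trace_nat {d : ℕ} {P : Matrix (Fin d) (Fin d) ℂ} (hP : IsProjector P) :
    ∃ n : ℕ, P.trace = (n : ℂ) :=
  proj_trace_nat' hP.1 hP.2

lemma psd_smul {d : ℕ} {A : Matrix (Fin d) (Fin d) ℂ} (hA : A.PosSemidef) {c : ℝ} (hc : 0 ≤ c) :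
    ((c : ℂ) • A).PosSemidef := by
  have h := hA.conjTranspose_mul_mul_same (B := ((Real.sqrt c : ℂ) • (1 : Matrix (Fin d) (Fin d) ℂ)))
  have he : ((Real.sqrt c : ℂ) • (1 : Matrix (Fin d) (Fin d) ℂ))ᴴ * A *
      ((Real.sqrt c : ℂ) • (1 : Matrix (Fin d) (Fin d) ℂ)) = (c : ℂ) • A := by
    rw [Matrix.conjTranspose_smul, Matrix.conjTranspose_one]
    rw [Matrix.smul_mul, Matrix.one_mul, Matrix.mul_smul, Matrix.mul_one, smul_smul]
    rw [Complex.star_def, Complex.conj_ofReal, ← Complex.ofReal_mul, Real.mul_self_sqrt hc]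
  rwa [he] at h

lemma proj_sub {d : ℕ} {A B : Matrix (Fin d) (Fin d) ℂ} (hA : IsProjector A)
    (hB : IsProjector B) (hAB : A * B = A) (hBA : B * A = A) : IsProjector (B - A) := by
  constructor
  · rw [sub_mul, mul_sub, mul_sub, hA.1, hB.1, hAB, hBA]; abel
  · rw [Matrix.conjTranspose_sub, hA.2, hB.2]

lemma L_mono {d : ℕ} {L R : Matrix (Fin d) (Fin d) ℂ → ℝ} (hQ : IsQIVPM L R)
    {A B : Matrix (Fin d) (Fin d) ℂ} (hA : IsProjector A) (hB : IsProjector B)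
    (hAB : A * B = A) (hBA : B * A = A) : L A ≤ L B := by
  have hG : IsProjector (B - A) := proj_sub hA hB hAB hBA
  have hAG : A * (B - A) = 0 := by rw [mul_sub, hAB, hA.1, sub_self]
  have hGA : (B - A) * A = 0 := by rw [sub_mul, hBA, hA.1, sub_self]
  have h := (hQ.2.2.2.2 A (B - A) hA hG (by rw [hAG, hGA])).1
  rw [hAG] at h
  have he : A + (B - A) - (0 : Matrix (Fin d) (Fin d) ℂ) = B := by abel
  rw [he, hQ.2.1.1] at h
  have hge := (hQ.1 (B - A) hG).1
  linarith

section RingLemmas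

variable {A : Type*} [Ring A] {p q x : A}

lemma lem_pY (hp : p*p = p) (hpq : p*q = p) :
    p * (p + q*x - p*(q*x)) = p := by
  have e1 : p*(q*x) = p*x := by rw [← mul_assoc, hpq]
  have e7 : p*(p*x) = p*x := by rw [← mul_assoc, hp]
  simp only [mul_add, mul_sub, hp, e1, e7]
  abel

lemma lem_Yp (hp : p*p = p) (hpq : p*q = p) (hqp : q*p = p) (hpx : p*x = x*p) :
    (p + q*x - p*(q*x)) * p = p := by
  have e1 : p*(q*x) = p*x := by rw [← mul_assoc, hpq]
  have e2 : (q*x)*p = p*x := by rw [mul_assoc, ← hpx, ← mul_assoc, hqp]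
  have e3 : (p*x)*p = p*x := by rw [mul_assoc, ← hpx, ← mul_assoc, hp]
  simp only [add_mul, sub_mul, hp, e1, e2, e3]
  abel

lemma lem_qY (hq : q*q = q) (hpq : p*q = p) (hqp : q*p = p) :
    q * (p + q*x - p*(q*x)) = p + q*x - p*(q*x) := by
  have e1 : p*(q*x) = p*x := by rw [← mul_assoc, hpq]
  have e2 : q*(q*x) = q*x := by rw [← mul_assoc, hq]
  have e3 : q*(p*x) = p*x := by rw [← mul_assoc, hqp]
  simp only [mul_add, mul_sub, hqp, e1, e2, e3]

lemma lem_Yq (hq : q*q = q) (hpq : p*q = p) (hqx : q*x = x*q) :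
    (p + q*x - p*(q*x)) * q = p + q*x - p*(q*x) := by
  have e1 : p*(q*x) = p*x := by rw [← mul_assoc, hpq]
  have e2 : (q*x)*q = q*x := by rw [mul_assoc, ← hqx, ← mul_assoc, hq]
  have e3 : (p*x)*q = p*x := by rw [mul_assoc, ← hqx, ← mul_assoc, hpq]
  simp only [add_mul, sub_mul, hpq, e1, e2, e3]

lemma lem_meet (hp : p*p = p) (hpq : p*q = p) (hqx : q*x = x*q) (hc : q*x = p*x) :
    (p + x - p*x) * q = p := by
  have e1 : x*q = p*x := by rw [← hqx, hc]
  have e2 : (p*x)*q = p*x := by rw [mul_assoc, e1, ← mul_assoc, hp]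
  simp only [add_mul, sub_mul, hpq, e1, e2]
  abel

lemma lem_join1 (hp : p*p = p) (hx : x*x = x) (hpq : p*q = p)
    (hqx : q*x = x*q) :
    (p + x - p*x) * (q + x - q*x) = p + x - p*x := by
  have e1 : p*(q*x) = p*x := by rw [← mul_assoc, hpq]
  have e2 : x*(q*x) = q*x := by rw [← mul_assoc, ← hqx, mul_assoc, hx]
  have e3 : (p*x)*q = p*x := by rw [mul_assoc, ← hqx, e1]
  have e4 : (p*x)*x = p*x := by rw [mul_assoc, hx]
  have e5 : (p*x)*(q*x) = p*x := by rw [mul_assoc, e2, e1]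
  have e6 : x*q = q*x := hqx.symm
  simp only [mul_add, mul_sub, add_mul, sub_mul, hp, hx, hpq, e1, e2, e3, e4, e5, e6]
  abel

lemma lem_join2 (hp : p*p = p) (hx : x*x = x) (hqp : q*p = p)
    (hpx : p*x = x*p) : (q + x - q*x) * (p + x - p*x) = p + x - p*x := by
  have e1 : q*(p*x) = p*x := by rw [← mul_assoc, hqp]
  have e2 : x*p = p*x := hpx.symm
  have e3 : x*(p*x) = p*x := by rw [← mul_assoc, ← hpx, mul_assoc, hx]
  have e4 : (q*x)*p = p*x := by rw [mul_assoc, e2, e1]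
  have e5 : (q*x)*x = q*x := by rw [mul_assoc, hx]
  have e6 : (q*x)*(p*x) = p*x := by rw [mul_assoc, e3, e1]
  simp only [mul_add, mul_sub, add_mul, sub_mul, hp, hx, hqp, e1, e2, e3, e4, e5, e6]
  abel

end RingLemmas

end Helpers
lemma core_aux (d : ℕ) (L R : Matrix (Fin d) (Fin d) ℂ → ℝ) (hQ : IsQIVPM L R)
    (S : Set (Matrix (Fin d) (Fin d) ℂ))
    (hproj : ∀ P ∈ S, IsProjector P)
    (hcomm : ∀ P ∈ S, ∀ Q ∈ S, P * Q = Q * P)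
    (h1 : (1 : Matrix (Fin d) (Fin d) ℂ) ∈ S)
    (hcompl : ∀ P ∈ S, 1 - P ∈ S)
    (hmul : ∀ P ∈ S, ∀ Q ∈ S, P * Q ∈ S)
    (hjoin : ∀ P ∈ S, ∀ Q ∈ S, P + Q - P * Q ∈ S) :
    ∀ k : ℕ, ∀ P ∈ S, ((1 : Matrix (Fin d) (Fin d) ℂ) - P).trace.re ≤ (k : ℝ) →
    ∃ ρ : Matrix (Fin d) (Fin d) ℂ, ρ.PosSemidef ∧ ρ.trace = 1 - (L P : ℂ) ∧
      ∀ X ∈ S, L (P + X - P * X) - L P ≤ ((ρ * X).trace).re := by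
  classical
  have hL0 := hQ.2.1.1
  have hL1 := hQ.2.2.1.1
  have hconv := hQ.2.2.2.2
  -- the case P = 1, used repeatedly
  have hone : ∀ P : Matrix (Fin d) (Fin d) ℂ, P = 1 →
      ∃ ρ : Matrix (Fin d) (Fin d) ℂ, ρ.PosSemidef ∧ ρ.trace = 1 - (L P : ℂ) ∧
        ∀ X ∈ S, L (P + X - P * X) - L P ≤ ((ρ * X).trace).re := by
    rintro P rfl
    refine ⟨0, Matrix.PosSemidef.zero, by rw [hL1]; simp, ?_⟩
    intro X hXS
    have hid : (1 : Matrix (Fin d) (Fin d) ℂ) + X - 1 * X = 1 := by rw [one_mul]; abel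
    rw [hid, Matrix.zero_mul, Matrix.trace_zero]
    simp
  intro k
  induction k with
  | zero =>
    intro P hPS hk
    have hproj1P : IsProjector (1 - P) := hproj _ (hcompl P hPS)
    have h0' : ((1 : Matrix (Fin d) (Fin d) ℂ) - P).trace.re = 0 :=
      le_antisymm (by exact_mod_cast hk) (psd_trace_re_nonneg hproj1P.posSemidef')
    have hP1 : P = 1 := (sub_eq_zero.mp (psd_trace_eq_zero hproj1P.posSemidef' h0')).symm
    exact hone P hP1
  | succ k ih =>
    intro P hPS hk
    by_cases hP1 : P = 1
    · exact hone P hP1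
    -- choice of a trace-minimal Q strictly above P in S
    have hPproj := hproj P hPS
    have hex : ∃ n : ℕ, ∃ Q, Q ∈ S ∧ P * Q = P ∧ Q ≠ P ∧ Q.trace = (n : ℂ) := by
      obtain ⟨n, hn⟩ := (hproj 1 h1).trace_nat
      exact ⟨n, 1, h1, mul_one P, fun h => hP1 h.symm, hn⟩
    obtain ⟨Q, hQS, hPQ, hQne, hQtr⟩ := Nat.find_spec hex
    set n₀ := Nat.find hex with hn₀
    have hmin : ∀ Y ∈ S, P * Y = P → Y ≠ P → ∀ m : ℕ, Y.trace = (m : ℂ) → n₀ ≤ m := by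
      intro Y hYS hPY hYne m hm
      exact Nat.find_min' hex ⟨Y, hYS, hPY, hYne, hm⟩
    have hQproj := hproj Q hQS
    have hQP : Q * P = P := by rw [← hcomm P hPS Q hQS]; exact hPQ
    -- dichotomy: for each X in S, either Q*X = P*X or Q*X - P*X = Q - P
    have hdich : ∀ X ∈ S, Q * X = P * X ∨ Q * X - P * X = Q - P := by
      intro X hXS
      by_cases hc : Q * X = P * X
      · exact Or.inl hc
      right
      have hQXS : Q * X ∈ S := hmul Q hQS X hXS
      have hYS : P + Q * X - P * (Q * X) ∈ S := hjoin P hPS (Q * X) hQXS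
      have hPQX : P * (Q * X) = P * X := by rw [← mul_assoc, hPQ]
      have hPY : P * (P + Q * X - P * (Q * X)) = P := lem_pY hPproj.1 hPQ
      have hYne : P + Q * X - P * (Q * X) ≠ P := by
        intro h
        apply hc
        have h2 : Q * X - P * X = (P + Q * X - P * (Q * X)) - P := by rw [hPQX]; abel
        rw [h, sub_self] at h2
        exact sub_eq_zero.mp h2
      have hYQ : (P + Q * X - P * (Q * X)) * Q = P + Q * X - P * (Q * X) :=
        lem_Yq hQproj.1 hPQ (hcomm Q hQS X hXS)
      have hQY : Q * (P + Q * X - P * (Q * X)) = P + Q * X - P * (Q * X) :=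
        lem_qY hQproj.1 hPQ hQP
      obtain ⟨m, hm⟩ := (hproj _ hYS).trace_nat
      have hn₀m : n₀ ≤ m := hmin _ hYS hPY hYne m hm
      have hQYproj : IsProjector (Q - (P + Q * X - P * (Q * X))) :=
        proj_sub (hproj _ hYS) hQproj hYQ hQY
      have htr0 : (Q - (P + Q * X - P * (Q * X))).trace.re = 0 := by
        have h1' := psd_trace_re_nonneg hQYproj.posSemidef'
        have h2' : (Q - (P + Q * X - P * (Q * X))).trace.re ≤ 0 := by
          rw [Matrix.trace_sub, hQtr, hm, Complex.sub_re, Complex.natCast_re,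
            Complex.natCast_re]
          have : (n₀ : ℝ) ≤ (m : ℝ) := by exact_mod_cast hn₀m
          linarith
        linarith
      have hQY' : Q = P + Q * X - P * (Q * X) :=
        sub_eq_zero.mp (psd_trace_eq_zero hQYproj.posSemidef' htr0)
      have h2 : Q * X - P * X = (P + Q * X - P * (Q * X)) - P := by rw [hPQX]; abel
      rw [h2, ← hQY']
    -- the gap G = Q - P has positive natural trace
    have hQPproj : IsProjector (Q - P) := proj_sub hPproj hQproj hPQ hQP
    obtain ⟨g, hg⟩ := hQPproj.trace_nat
    have hg1 : (1 : ℝ) ≤ (g : ℝ) := by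
      have : g ≠ 0 := by
        intro h
        subst h
        have hz : (Q - P).trace.re = 0 := by rw [hg]; simp
        exact hQne (sub_eq_zero.mp (psd_trace_eq_zero hQPproj.posSemidef' hz))
      exact_mod_cast Nat.one_le_iff_ne_zero.mpr this
    have hgne : (g : ℝ) ≠ 0 := by linarith
    -- corank bound for Q
    have hbound : ((1 : Matrix (Fin d) (Fin d) ℂ) - Q).trace.re ≤ (k : ℝ) := by
      have he : (1 : Matrix (Fin d) (Fin d) ℂ) - Q = ((1 : Matrix (Fin d) (Fin d) ℂ) - P) - (Q - P) := by
        abel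
      rw [he, Matrix.trace_sub, Complex.sub_re, hg, Complex.natCast_re]
      push_cast at hk
      linarith
    obtain ⟨ρ', hρ'psd, hρ'tr, hρ'ineq⟩ := ih Q hQS hbound
    have hLPQ : L P ≤ L Q := L_mono hQ hPproj hQproj hPQ hQP
    have hc0 : 0 ≤ (L Q - L P) / (g : ℝ) := div_nonneg (by linarith) (by linarith)
    refine ⟨ρ' + (((L Q - L P) / (g : ℝ) : ℝ) : ℂ) • (Q - P),
      Matrix.PosSemidef.add hρ'psd (psd_smul hQPproj.posSemidef' hc0), ?_, ?_⟩
    · rw [Matrix.trace_add, Matrix.trace_smul, hρ'tr, hg]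
      simp only [smul_eq_mul]
      rw [show ((g : ℕ) : ℂ) = (((g : ℝ)) : ℂ) by push_cast; ring, ← Complex.ofReal_mul,
        div_mul_cancel₀ _ hgne]
      push_cast
      ring
    · intro X hXS
      have hXproj := hproj X hXS
      have htr_split : ((ρ' + (((L Q - L P) / (g : ℝ) : ℝ) : ℂ) • (Q - P)) * X).trace =
          (ρ' * X).trace + (((L Q - L P) / (g : ℝ) : ℝ) : ℂ) * ((Q * X - P * X).trace) := by
        rw [Matrix.add_mul, Matrix.smul_mul, Matrix.trace_add, Matrix.trace_smul,
          Matrix.sub_mul]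
        simp [smul_eq_mul]
      have hih := hρ'ineq X hXS
      rcases hdich X hXS with hc' | hc'
      · -- no gain on this step
        have htr2 : ((ρ' + (((L Q - L P) / (g : ℝ) : ℝ) : ℂ) • (Q - P)) * X).trace =
            (ρ' * X).trace := by
          rw [htr_split, sub_eq_zero.mpr hc']
          simp
        rw [htr2]
        have hPXS : P + X - P * X ∈ S := hjoin P hPS X hXS
        have hsup := (hconv (P + X - P * X) Q (hproj _ hPXS) hQproj (hcomm _ hPXS Q hQS)).1
        have hmeet : (P + X - P * X) * Q = P := lem_meet hPproj.1 hPQ (hcomm Q hQS X hXS) hc'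
        rw [hmeet] at hsup
        have hjoin_id : P + X - P * X + Q - P = Q + X - Q * X := by rw [hc']; abel
        rw [hjoin_id] at hsup
        linarith
      · -- full gain on this step
        have htr2 : (((ρ' + (((L Q - L P) / (g : ℝ) : ℝ) : ℂ) • (Q - P)) * X).trace).re =
            ((ρ' * X).trace).re + (L Q - L P) := by
          rw [htr_split, hc', hg, Complex.add_re]
          congr 1
          rw [show ((g : ℕ) : ℂ) = (((g : ℝ)) : ℂ) by push_cast; ring, ← Complex.ofReal_mul,
            div_mul_cancel₀ _ hgne, Complex.ofReal_re]
        rw [htr2]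
        have hmono : L (P + X - P * X) ≤ L (Q + X - Q * X) :=
          L_mono hQ (hproj _ (hjoin P hPS X hXS)) (hproj _ (hjoin Q hQS X hXS))
            (lem_join1 hPproj.1 hXproj.1 hPQ (hcomm Q hQS X hXS))
            (lem_join2 hPproj.1 hXproj.1 hQP (hcomm P hPS X hXS))
        linarith
/-- Non-empty core for compatible measurements: a QIVPM restricted to a commuting
subspace of events is consistent with at least one state. -/
theorem nonempty_core_for_commuting_events (d : ℕ)
    (L R : Matrix (Fin d) (Fin d) ℂ → ℝ) (hQ : IsQIVPM L R)
    (S : Set (Matrix (Fin d) (Fin d) ℂ))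
    (hproj : ∀ P ∈ S, IsProjector P)
    (hcomm : ∀ P ∈ S, ∀ Q ∈ S, P * Q = Q * P)
    (h0 : (0 : Matrix (Fin d) (Fin d) ℂ) ∈ S)
    (h1 : (1 : Matrix (Fin d) (Fin d) ℂ) ∈ S)
    (hcompl : ∀ P ∈ S, 1 - P ∈ S)
    (hmul : ∀ P ∈ S, ∀ Q ∈ S, P * Q ∈ S)
    (hjoin : ∀ P ∈ S, ∀ Q ∈ S, P + Q - P * Q ∈ S) :
    ∃ ρ : Matrix (Fin d) (Fin d) ℂ, IsState ρ ∧
      ∀ P ∈ S, L P ≤ (Matrix.trace (ρ * P)).re ∧ (Matrix.trace (ρ * P)).re ≤ R P := by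
  have hk0 : ((1 : Matrix (Fin d) (Fin d) ℂ) - 0).trace.re ≤ (d : ℝ) := by
    rw [sub_zero, Matrix.trace_one]
    simp
  obtain ⟨ρ, hpsd, htr, hineq⟩ :=
    core_aux d L R hQ S hproj hcomm h1 hcompl hmul hjoin d 0 h0 hk0
  have htr1 : ρ.trace = 1 := by rw [htr, hQ.2.1.1]; simp
  refine ⟨ρ, ⟨hpsd, htr1⟩, ?_⟩
  intro P hPS
  have hlow : ∀ X ∈ S, L X ≤ ((ρ * X).trace).re := by
    intro X hXS
    have h := hineq X hXS
    rw [hQ.2.1.1] at h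
    have hid : (0 : Matrix (Fin d) (Fin d) ℂ) + X - 0 * X = X := by
      rw [Matrix.zero_mul]; abel
    rw [hid] at h
    linarith
  constructor
  · exact hlow P hPS
  · have h := hlow (1 - P) (hcompl P hPS)
    have hcompl_tr : ((ρ * (1 - P)).trace).re = 1 - ((ρ * P).trace).re := by
      rw [Matrix.mul_sub, Matrix.mul_one, Matrix.trace_sub, htr1, Complex.sub_re,
        Complex.one_re]
    rw [hcompl_tr, (hQ.2.2.2.1 P (hproj P hPS)).1] at h
    linarith
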